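/- Let N ≥ 1, let r ∈ ℝ^N have all coordinates positive, and let 𝒯 be a finite nonempty family of 4-element subsets of Fin N such that (i) every index i ∈ Fin N belongs to some τ ∈ 𝒯, and (ii) for any τ, τ' ∈ 𝒯 there is a finite chain τ = τ₀, τ₁, …, τ_m = τ' in 𝒯 with τ_k ∩ τ_{k+1} ≠ ∅ for each k. Suppose for each τ ∈ 𝒯 we are given a real N×N positive semidefinite matrix Λ_τ with (Λ_τ)_{ij} = 0 whenever i ∉ τ or j ∉ τ, and such that for every x ∈ ℝ^N, Λ_τ.mulVec x = 0 if and only if there exists t ∈ ℝ with xᵢ = t·rᵢ for all i ∈ τ. Then Λ := Σ_{τ ∈ 𝒯} Λ_τ is positive semidefinite and, for every x ∈ ℝ^N, Λ.mulVec x = 0 if and only if x = t • r for some t ∈ ℝ; in particular Λ has rank N − 1. -/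

import Mathlib

open Matrix

lemma dotProduct_sum_aux {N : ℕ} {ι : Type*} (s : Finset ι) (x : Fin N → ℝ)
    (v : ι → Fin N → ℝ) : x ⬝ᵥ (∑ τ ∈ s, v τ) = ∑ τ ∈ s, x ⬝ᵥ v τ := by
  classical
  induction s using Finset.induction with
  | empty => simp
  | insert a s h ih => simp [Finset.sum_insert h, dotProduct_add, ih]

lemma sum_mulVec_aux {N : ℕ} {ι : Type*} (s : Finset ι) (f : ι → Matrix (Fin N) (Fin N) ℝ)
    (x : Fin N → ℝ) : (∑ τ ∈ s, f τ) *ᵥ x = ∑ τ ∈ s, (f τ) *ᵥ x := by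
  classical
  induction s using Finset.induction with
  | empty => simp [Matrix.zero_mulVec]
  | insert a s h ih => simp [Finset.sum_insert h, Matrix.add_mulVec, ih]

/-- The Jacobian `Λ` of the Cooper–Rivin curvature map, being the sum over the tetrahedra
of positive semidefinite blocks supported on the tetrahedra (each with kernel given by the
restriction of `r`), is positive semidefinite with kernel exactly the span of `r`,
hence of rank `N - 1`. -/
theorem stmt_2 {N : ℕ} (hN : 1 ≤ N) (r : Fin N → ℝ) (hr : ∀ i, 0 < r i)
    (𝒯 : Finset (Finset (Fin N))) (hne : 𝒯.Nonempty)
    (hcard : ∀ τ ∈ 𝒯, τ.card = 4)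
    (hcover : ∀ i : Fin N, ∃ τ ∈ 𝒯, i ∈ τ)
    (hconn : ∀ τ ∈ 𝒯, ∀ τ' ∈ 𝒯, ∃ (m : ℕ) (c : ℕ → Finset (Fin N)),
      c 0 = τ ∧ c m = τ' ∧ (∀ k ≤ m, c k ∈ 𝒯) ∧
      ∀ k < m, (c k ∩ c (k + 1)).Nonempty)
    (Λ : Finset (Fin N) → Matrix (Fin N) (Fin N) ℝ)
    (hpsd : ∀ τ ∈ 𝒯, (Λ τ).PosSemidef)
    (hsupp : ∀ τ ∈ 𝒯, ∀ i j : Fin N, i ∉ τ ∨ j ∉ τ → Λ τ i j = 0)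
    (hker : ∀ τ ∈ 𝒯, ∀ x : Fin N → ℝ,
      (Λ τ).mulVec x = 0 ↔ ∃ t : ℝ, ∀ i ∈ τ, x i = t * r i) :
    (∑ τ ∈ 𝒯, Λ τ).PosSemidef ∧
      (∀ x : Fin N → ℝ, (∑ τ ∈ 𝒯, Λ τ).mulVec x = 0 ↔ ∃ t : ℝ, x = t • r) ∧
      (∑ τ ∈ 𝒯, Λ τ).rank = N - 1 := by
  classical
  set A := ∑ τ ∈ 𝒯, Λ τ with hA
  have hmv : ∀ x, A *ᵥ x = ∑ τ ∈ 𝒯, (Λ τ) *ᵥ x := fun x => sum_mulVec_aux 𝒯 Λ x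
  -- positive semidefiniteness
  have hSpsd : A.PosSemidef := by
    refine Matrix.PosSemidef.of_dotProduct_mulVec_nonneg ?_ ?_
    · show Aᴴ = A
      rw [hA, Matrix.conjTranspose_sum]
      exact Finset.sum_congr rfl fun τ hτ => (hpsd τ hτ).1
    · intro x
      rw [hmv x, dotProduct_sum_aux]
      exact Finset.sum_nonneg fun τ hτ => (hpsd τ hτ).dotProduct_mulVec_nonneg x
  -- kernel characterization
  have hkernel : ∀ x : Fin N → ℝ, A *ᵥ x = 0 ↔ ∃ t : ℝ, x = t • r := by
    intro x
    constructor
    · intro hx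
      -- each block kills x
      have hquad : ∀ τ ∈ 𝒯, star x ⬝ᵥ (Λ τ) *ᵥ x = 0 := by
        have hsum : ∑ τ ∈ 𝒯, star x ⬝ᵥ (Λ τ) *ᵥ x = 0 := by
          rw [← dotProduct_sum_aux, ← hmv, hx, dotProduct_zero]
        exact (Finset.sum_eq_zero_iff_of_nonneg
          (fun τ hτ => (hpsd τ hτ).dotProduct_mulVec_nonneg x)).mp hsum
      have hblk : ∀ τ ∈ 𝒯, (Λ τ) *ᵥ x = 0 := fun τ hτ =>
        ((hpsd τ hτ).dotProduct_mulVec_zero_iff x).mp (hquad τ hτ)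
      obtain ⟨τ₀, hτ₀⟩ := hne
      obtain ⟨t₀, ht₀⟩ := (hker τ₀ hτ₀ x).mp (hblk τ₀ hτ₀)
      -- propagate t₀ along chains
      have hall : ∀ τ ∈ 𝒯, ∀ i ∈ τ, x i = t₀ * r i := by
        intro τ hτ
        obtain ⟨m, c, hc0, hcm, hcmem, hchain⟩ := hconn τ₀ hτ₀ τ hτ
        have key : ∀ k, k ≤ m → ∀ i ∈ c k, x i = t₀ * r i := by
          intro k
          induction k with
          | zero => intro _; rw [hc0]; exact ht₀
          | succ n ih =>
            intro hnm i hi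
            have hn : n ≤ m := Nat.le_of_succ_le hnm
            obtain ⟨j, hj⟩ := hchain n (Nat.lt_of_succ_le hnm)
            rw [Finset.mem_inter] at hj
            obtain ⟨t, ht⟩ := (hker (c (n+1)) (hcmem (n+1) hnm) x).mp
              (hblk (c (n+1)) (hcmem (n+1) hnm))
            have h1 : x j = t₀ * r j := ih hn j hj.1
            have h2 : x j = t * r j := ht j hj.2
            have : t = t₀ := by
              have h3 : t₀ * r j = t * r j := h1.symm.trans h2
              exact (mul_right_cancel₀ (hr j).ne' h3).symm
            rw [ht i hi, this]
        intro i hi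
        exact key m le_rfl i (hcm ▸ hi)
      refine ⟨t₀, funext fun i => ?_⟩
      obtain ⟨τ, hτ, hiτ⟩ := hcover i
      simpa [Pi.smul_apply, smul_eq_mul] using hall τ hτ i hiτ
    · rintro ⟨t, rfl⟩
      rw [hmv]
      refine Finset.sum_eq_zero fun τ hτ => ?_
      exact (hker τ hτ _).mpr ⟨t, fun i _ => rfl⟩
  refine ⟨hSpsd, hkernel, ?_⟩
  -- rank
  have hr0 : r ≠ 0 := fun h => absurd (congrFun h ⟨0, hN⟩) (hr ⟨0, hN⟩).ne'
  have hkerEq : LinearMap.ker A.mulVecLin = Submodule.span ℝ {r} := by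
    ext x
    rw [LinearMap.mem_ker, Matrix.mulVecLin_apply, hkernel x, Submodule.mem_span_singleton]
    exact ⟨fun ⟨t, h⟩ => ⟨t, h.symm⟩, fun ⟨t, h⟩ => ⟨t, h.symm⟩⟩
  have h1 := LinearMap.finrank_range_add_finrank_ker A.mulVecLin
  rw [hkerEq, finrank_span_singleton hr0, Module.finrank_fin_fun] at h1
  have h2 : A.rank = Module.finrank ℝ (LinearMap.range A.mulVecLin) := rfl
  omega
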